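/- Let y be a positive function in W^{1,1}_loc(ℝ₊) and x a function in L¹_loc(ℝ₊) that is almost everywhere nonnegative, satisfying y'(t) + x(t) ≤ C·y(t)·x(t) for almost every t ≥ 0, where C > 0. If y(0) = y₀ ≤ 1/(4C), then for all T ≥ 0 one has y(T) + (1/2)∫₀^T x(t) dt ≤ y₀; in particular y is bounded by y₀ on ℝ₊ and x is integrable on ℝ₊ with ∫₀^∞ x ≤ 2y₀. -/

import Mathlib

open MeasureTheory

/-- Gronwall-type absorption lemma (Lemma A.1 of de Anna–Zarnescu). -/
theorem stmt_0 (C : ℝ) (hC : 0 < C) (y x y' : ℝ → ℝ)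
    (hy_pos : ∀ t, 0 ≤ t → 0 < y t)
    (hx_loc : LocallyIntegrableOn x (Set.Ici 0))
    (hx_nonneg : ∀ᵐ t ∂(volume.restrict (Set.Ici (0:ℝ))), 0 ≤ x t)
    (hy_deriv : ∀ᵐ t ∂(volume.restrict (Set.Ici (0:ℝ))), HasDerivAt y (y' t) t)
    (hy_FTC : ∀ T, 0 ≤ T → y T = y 0 + ∫ t in (0:ℝ)..T, y' t)
    (hineq : ∀ᵐ t ∂(volume.restrict (Set.Ici (0:ℝ))), y' t + x t ≤ C * y t * x t)
    (hy0 : y 0 ≤ 1 / (4 * C)) :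
    (∀ T, 0 ≤ T → y T + (1/2) * ∫ t in (0:ℝ)..T, x t ≤ y 0) ∧
    (∀ t, 0 ≤ t → y t ≤ y 0) ∧
    IntegrableOn x (Set.Ici 0) ∧
    ∫ t in Set.Ici (0:ℝ), x t ≤ 2 * y 0 := by
  have hC2 : (0:ℝ) < 2*C := by linarith
  have hC4 : (0:ℝ) < 4*C := by linarith
  have hy0pos : (0:ℝ) < y 0 := hy_pos 0 le_rfl
  have hlt : 1/(4*C) < 1/(2*C) := by
    rw [div_lt_div_iff₀ hC4 hC2]; linarith
  -- integrability of x on bounded intervals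
  have xint : ∀ T : ℝ, IntegrableOn x (Set.Ioc 0 T) := by
    intro T
    rcases le_or_gt T 0 with h | h
    · rw [Set.Ioc_eq_empty (by exact fun hh => absurd (hh.trans_le h) (lt_irrefl 0))]
      exact integrableOn_empty
    · exact (hx_loc.integrableOn_compact_subset (Set.Icc_subset_Ici_self) isCompact_Icc).mono_set
        Set.Ioc_subset_Icc_self
  have xiv : ∀ T, 0 ≤ T → IntervalIntegrable x volume 0 T := fun T hT =>
    (intervalIntegrable_iff_integrableOn_Ioc_of_le hT).mpr (xint T)
  have xnn : ∀ T, 0 ≤ T → 0 ≤ ∫ t in (0:ℝ)..T, x t := by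
    intro T hT
    apply intervalIntegral.integral_nonneg_of_ae_restrict hT
    exact ae_restrict_of_ae_restrict_of_subset (fun t ht => ht.1) hx_nonneg
  -- a.e. nonnegativity on Ioc 0 T
  have xnn_ae : ∀ T : ℝ, ∀ᵐ t ∂(volume.restrict (Set.Ioc 0 T)), 0 ≤ x t := fun T =>
    ae_restrict_of_ae_restrict_of_subset (fun t ht => ht.1.le) hx_nonneg
  -- key pointwise a.e. estimate
  have key : ∀ T, 0 ≤ T → (∀ v, 0 ≤ v → v < T → y v ≤ 1/(2*C)) →
      ∀ᵐ t ∂(volume.restrict (Set.Ioc 0 T)), y' t ≤ -(1/2) * x t := by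
    intro T hT hsmall
    have h2 : ∀ᵐ t ∂(volume.restrict (Set.Ioc 0 T)), y' t + x t ≤ C * y t * x t :=
      ae_restrict_of_ae_restrict_of_subset (fun t ht => ht.1.le) hineq
    have h3 : ∀ᵐ t ∂(volume.restrict (Set.Ioc 0 T)), t ∈ Set.Ioc 0 T :=
      ae_restrict_mem measurableSet_Ioc
    have h4 : ∀ᵐ t ∂(volume.restrict (Set.Ioc 0 T)), t ≠ T := by
      refine ae_restrict_of_ae ?_
      rw [MeasureTheory.ae_iff]
      simpa using Real.volume_singleton (a := T)
    filter_upwards [xnn_ae T, h2, h3, h4] with t hx0 hin hmem hne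
    have htT : t < T := lt_of_le_of_ne hmem.2 hne
    have hyb : y t ≤ 1/(2*C) := hsmall t hmem.1.le htT
    have hCy : C * y t ≤ 1/2 := by
      have := mul_le_mul_of_nonneg_left hyb hC.le
      rw [mul_one_div] at this
      calc C * y t ≤ C / (2*C) := this
        _ = 1/2 := by field_simp
    nlinarith [mul_le_mul_of_nonneg_right hCy hx0]
  -- integral estimate assuming smallness before T and integrability
  have estim : ∀ T, 0 ≤ T → IntervalIntegrable y' volume 0 T →
      (∀ v, 0 ≤ v → v < T → y v ≤ 1/(2*C)) →
      y T + (1/2) * ∫ t in (0:ℝ)..T, x t ≤ y 0 := by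
    intro T hT hint hsmall
    have hy'int : IntegrableOn y' (Set.Ioc 0 T) :=
      (intervalIntegrable_iff_integrableOn_Ioc_of_le hT).mp hint
    have hxint' : IntegrableOn (fun t => -(1/2) * x t) (Set.Ioc 0 T) := (xint T).const_mul _
    have hmono : ∫ t in Set.Ioc 0 T, y' t ≤ ∫ t in Set.Ioc 0 T, -(1/2) * x t :=
      setIntegral_mono_ae_restrict hy'int hxint' (key T hT hsmall)
    have e1 : ∫ t in (0:ℝ)..T, y' t = ∫ t in Set.Ioc 0 T, y' t :=
      intervalIntegral.integral_of_le hT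
    have e2 : ∫ t in (0:ℝ)..T, x t = ∫ t in Set.Ioc 0 T, x t :=
      intervalIntegral.integral_of_le hT
    have e3 : ∫ t in Set.Ioc 0 T, -(1/2) * x t = -(1/2) * ∫ t in Set.Ioc 0 T, x t :=
      integral_const_mul _ _
    have hftc := hy_FTC T hT
    rw [e1] at hftc
    rw [e3] at hmono
    rw [e2]
    linarith [hmono]
  -- smallness of y on intervals of integrability
  have K : ∀ s, 0 ≤ s → IntervalIntegrable y' volume 0 s →
      ∀ u, 0 ≤ u → u ≤ s → y u ≤ 1/(2*C) := by
    intro s hs hint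
    by_contra hcon
    push_neg at hcon
    obtain ⟨u, hu0, hus, hyu⟩ := hcon
    have hconty : ContinuousOn y (Set.Icc 0 s) := by
      have hprim : ContinuousOn (fun b => ∫ t in (0:ℝ)..b, y' t) (Set.uIcc 0 s) :=
        intervalIntegral.continuousOn_primitive_interval' hint (by
          rw [Set.uIcc_of_le hs]; exact Set.left_mem_Icc.mpr hs)
      rw [Set.uIcc_of_le hs] at hprim
      exact (continuousOn_const.add hprim).congr fun v hv => hy_FTC v hv.1
    set B := {v | v ∈ Set.Icc 0 s ∧ 1/(2*C) < y v} with hBdef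
    have hBne : B.Nonempty := ⟨u, ⟨hu0, hus⟩, hyu⟩
    have hBbdd : BddBelow B := ⟨0, fun v hv => hv.1.1⟩
    set u₀ := sInf B with hu₀def
    have hclosed : IsClosed (Set.Icc 0 s ∩ y ⁻¹' (Set.Ici (1/(2*C)))) :=
      hconty.preimage_isClosed_of_isClosed isClosed_Icc isClosed_Ici
    have hmem : u₀ ∈ Set.Icc 0 s ∩ y ⁻¹' (Set.Ici (1/(2*C))) := by
      have hsub : closure B ⊆ Set.Icc 0 s ∩ y ⁻¹' (Set.Ici (1/(2*C))) :=
        hclosed.closure_subset_iff.mpr (fun v hv => ⟨hv.1, le_of_lt hv.2⟩)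
      exact hsub (csInf_mem_closure hBne hBbdd)
    have hu₀0 : 0 ≤ u₀ := hmem.1.1
    have hu₀s : u₀ ≤ s := hmem.1.2
    have hbefore : ∀ v, 0 ≤ v → v < u₀ → y v ≤ 1/(2*C) := by
      intro v hv hvu
      by_contra hy'
      push_neg at hy'
      have hvB : v ∈ B := ⟨⟨hv, hvu.le.trans hu₀s⟩, hy'⟩
      exact absurd (csInf_le hBbdd hvB) (not_le.mpr hvu)
    have hint' : IntervalIntegrable y' volume 0 u₀ :=
      (intervalIntegrable_iff_integrableOn_Ioc_of_le hu₀0).mpr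
        (((intervalIntegrable_iff_integrableOn_Ioc_of_le hs).mp hint).mono_set
          (Set.Ioc_subset_Ioc_right hu₀s))
    have hest := estim u₀ hu₀0 hint' hbefore
    have h2 : y u₀ ≤ y 0 := by linarith [xnn u₀ hu₀0]
    have h3 : 1/(2*C) ≤ y u₀ := hmem.2
    linarith
  -- y' is interval integrable on every [0, s]
  have allInt : ∀ s, 0 ≤ s → IntervalIntegrable y' volume 0 s := by
    by_contra hcon
    push_neg at hcon
    obtain ⟨s₀, hs₀, hbad⟩ := hcon
    set A := {s : ℝ | 0 ≤ s ∧ IntervalIntegrable y' volume 0 s} with hAdef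
    have h00 : (0:ℝ) ∈ A := by
      refine ⟨le_rfl, (intervalIntegrable_iff_integrableOn_Ioc_of_le le_rfl).mpr ?_⟩
      rw [Set.Ioc_self]; exact integrableOn_empty
    have hAne : A.Nonempty := ⟨0, h00⟩
    have hdc : ∀ a ∈ A, ∀ u, 0 ≤ u → u ≤ a → u ∈ A := by
      intro a ha u hu hua
      exact ⟨hu, (intervalIntegrable_iff_integrableOn_Ioc_of_le hu).mpr
        (((intervalIntegrable_iff_integrableOn_Ioc_of_le ha.1).mp ha.2).mono_set
          (Set.Ioc_subset_Ioc_right hua))⟩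
    have hAbdd : BddAbove A := by
      refine ⟨s₀, fun a ha => ?_⟩
      by_contra h
      push_neg at h
      exact hbad (hdc a ha s₀ hs₀ h.le).2
    set M := sSup A with hMdef
    have hM0 : 0 ≤ M := le_csSup hAbdd h00
    have hinA : ∀ u, 0 ≤ u → u < M → u ∈ A := by
      intro u hu huM
      obtain ⟨a, haA, hua⟩ := exists_lt_of_lt_csSup hAne huM
      exact hdc a haA u hu hua.le
    have hjunk : ∀ t, M < t → y t = y 0 := by
      intro t ht
      have htA : t ∉ A := fun h => absurd (le_csSup hAbdd h) (not_le.mpr ht)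
      have hni : ¬ IntervalIntegrable y' volume 0 t := fun h => htA ⟨hM0.trans ht.le, h⟩
      rw [hy_FTC t (hM0.trans ht.le), intervalIntegral.integral_undef hni, add_zero]
    have hy'0 : ∀ᵐ t ∂(volume.restrict (Set.Ici (0:ℝ))), M < t → y' t = 0 := by
      refine hy_deriv.mono fun t hder ht => ?_
      have hev : y =ᶠ[nhds t] fun _ => y 0 :=
        Filter.eventually_of_mem (Ioi_mem_nhds ht) fun u hu => hjunk u hu
      exact hder.unique ((hasDerivAt_const t (y 0)).congr_of_eventuallyEq hev)
    have hmkM : IntegrableOn y' (Set.Ioc 0 M) := by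
      rcases eq_or_lt_of_le hM0 with h | h
      · rw [← h, Set.Ioc_self]; exact integrableOn_empty
      · set b : ℕ → ℝ := fun n => M - M/(n+1) with hbdef
        have hbpos : ∀ n : ℕ, 0 < M/((n:ℝ)+1) := fun n => div_pos h (by positivity)
        have hb_lt : ∀ n, b n < M := fun n => by
          have := hbpos n; simp only [hbdef]; linarith
        have hb_nonneg : ∀ n, 0 ≤ b n := fun n => by
          have h1 : M/((n:ℝ)+1) ≤ M := by
            apply div_le_self h.le
            have : (0:ℝ) ≤ (n:ℝ) := Nat.cast_nonneg n
            linarith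
          simp only [hbdef]; linarith
        have hb_tendsto : Filter.Tendsto b Filter.atTop (nhds M) := by
          have h1 : Filter.Tendsto (fun n : ℕ => M/((n:ℝ)+1)) Filter.atTop (nhds 0) := by
            apply Filter.Tendsto.div_atTop (tendsto_const_nhds)
            exact Filter.tendsto_atTop_add_const_right _ _ tendsto_natCast_atTop_atTop
          have h2 := (tendsto_const_nhds : Filter.Tendsto (fun _ : ℕ => M) Filter.atTop (nhds M)).sub h1
          simpa using h2
        have hbA : ∀ n, b n ∈ A := fun n => hinA (b n) (hb_nonneg n) (hb_lt n)
        have hfi : ∀ n : ℕ, IntegrableOn y' (Set.Ioc 0 (b n)) := fun n =>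
          (intervalIntegrable_iff_integrableOn_Ioc_of_le (hb_nonneg n)).mp (hbA n).2
        apply integrableOn_Ioc_of_intervalIntegral_norm_bounded_right (I := y 0) hfi hb_tendsto
        filter_upwards with n
        have hsmall : ∀ v, 0 ≤ v → v < b n → y v ≤ 1/(2*C) := fun v hv hvb =>
          K (b n) (hb_nonneg n) (hbA n).2 v hv hvb.le
        have heq : ∫ t in Set.Ioc 0 (b n), ‖y' t‖ = ∫ t in Set.Ioc 0 (b n), -y' t := by
          apply integral_congr_ae
          filter_upwards [key (b n) (hb_nonneg n) hsmall, xnn_ae (b n)] with t h1 h2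
          have : y' t ≤ 0 := by nlinarith
          rw [Real.norm_eq_abs, abs_of_nonpos this]
        rw [heq, integral_neg]
        have hy'eq : ∫ t in Set.Ioc 0 (b n), y' t = y (b n) - y 0 := by
          rw [← intervalIntegral.integral_of_le (hb_nonneg n)]
          have := hy_FTC (b n) (hb_nonneg n)
          linarith
        rw [hy'eq]
        have := hy_pos (b n) (hb_nonneg n)
        linarith
    have hM1 : IntegrableOn y' (Set.Ioc 0 (M+1)) := by
      have hz : ∀ᵐ t ∂(volume.restrict (Set.Ioc M (M+1))), y' t = 0 := by
        have hsub : Set.Ioc M (M+1) ⊆ Set.Ici (0:ℝ) := fun t ht => hM0.trans ht.1.le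
        have h1 := ae_restrict_of_ae_restrict_of_subset hsub hy'0
        have h2 : ∀ᵐ t ∂(volume.restrict (Set.Ioc M (M+1))), t ∈ Set.Ioc M (M+1) :=
          ae_restrict_mem measurableSet_Ioc
        filter_upwards [h1, h2] with t ht hmem
        exact ht hmem.1
      have h2 : IntegrableOn y' (Set.Ioc M (M+1)) :=
        (integrable_zero _ _ _).congr (hz.mono fun t ht => ht.symm)
      have := hmkM.union h2
      rwa [Set.Ioc_union_Ioc_eq_Ioc hM0 (by linarith)] at this
    have hMA : M + 1 ∈ A :=
      ⟨by linarith, (intervalIntegrable_iff_integrableOn_Ioc_of_le (by linarith)).mpr hM1⟩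
    have := le_csSup hAbdd hMA
    linarith
  -- main estimate
  have main : ∀ T, 0 ≤ T → y T + (1/2) * ∫ t in (0:ℝ)..T, x t ≤ y 0 := fun T hT =>
    estim T hT (allInt T hT) (fun v hv hvT => K T hT (allInt T hT) v hv hvT.le)
  have hyle : ∀ t, 0 ≤ t → y t ≤ y 0 := fun t ht => by linarith [main t ht, xnn t ht]
  have hxb : ∀ n : ℕ, ∫ t in (0:ℝ)..(n:ℝ), x t ≤ 2 * y 0 := fun n => by
    have h1 := main n (Nat.cast_nonneg n)
    have h2 := hy_pos n (Nat.cast_nonneg n)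
    linarith
  have hxint : IntegrableOn x (Set.Ioi (0:ℝ)) := by
    apply integrableOn_Ioi_of_intervalIntegral_norm_bounded (2 * y 0) 0
      (fun n : ℕ => xint n) tendsto_natCast_atTop_atTop
    filter_upwards with n
    have heq : ∫ t in (0:ℝ)..(n:ℝ), ‖x t‖ = ∫ t in (0:ℝ)..(n:ℝ), x t := by
      rw [intervalIntegral.integral_of_le (Nat.cast_nonneg n),
        intervalIntegral.integral_of_le (Nat.cast_nonneg n)]
      apply integral_congr_ae
      filter_upwards [xnn_ae (n:ℝ)] with t ht
      rw [Real.norm_eq_abs, abs_of_nonneg ht]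
    rw [heq]
    exact hxb n
  refine ⟨main, hyle, Iff.mpr integrableOn_Ici_iff_integrableOn_Ioi hxint, ?_⟩
  rw [integral_Ici_eq_integral_Ioi]
  have htend := intervalIntegral_tendsto_integral_Ioi 0 hxint tendsto_natCast_atTop_atTop
  exact le_of_tendsto htend (Filter.Eventually.of_forall hxb)
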